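/- Directional derivative identity for the quantile objective: let Γ(β) = Σ_{i=1}^n ρ_τ(Y_i − g_i(β)) where each g_i : ℝ^p → ℝ is differentiable at β̂ with gradient ∇g_i(β̂). Then for any unit vector γ, the one-sided directional derivative of Γ at β̂ in direction γ equals −Σ_{Y_i ≠ g_i(β̂)} ψ_τ(Y_i − g_i(β̂)) ⟨γ, ∇g_i(β̂)⟩ − Σ_{Y_i = g_i(β̂)} ψ_τ(−⟨γ, ∇g_i(β̂)⟩) ⟨γ, ∇g_i(β̂)⟩, where ψ_τ(e) = τ − 1_{e<0}. -/

import Mathlib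

open Filter Topology Finset

noncomputable def rho (τ e : ℝ) : ℝ := (τ - if e < 0 then 1 else 0) * e

noncomputable def psi (τ e : ℝ) : ℝ := τ - if e < 0 then 1 else 0

lemma rho_cont (τ : ℝ) : Continuous (rho τ) := by
  have h : rho τ = fun e => τ * e - min e 0 := by
    funext e
    unfold rho
    rcases lt_or_ge e 0 with h | h
    · rw [if_pos h, min_eq_left h.le]; ring
    · rw [if_neg (not_lt.mpr h), min_eq_right h]; ring
  rw [h]; continuity

lemma rho_smul (τ : ℝ) {c : ℝ} (hc : 0 < c) (x : ℝ) : rho τ (c * x) = c * rho τ x := by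
  unfold rho
  have : c * x < 0 ↔ x < 0 :=
    ⟨fun h => by nlinarith, fun h => mul_neg_of_pos_of_neg hc h⟩
  simp only [this]; ring

lemma rho_hasDerivAt (τ : ℝ) {e : ℝ} (he : e ≠ 0) : HasDerivAt (rho τ) (psi τ e) e := by
  have h : HasDerivAt (fun x : ℝ => (τ - if e < 0 then 1 else 0) * x)
      (τ - if e < 0 then 1 else 0) e := by
    simpa using (hasDerivAt_id e).const_mul (τ - if e < 0 then (1:ℝ) else 0)
  refine HasDerivAt.congr_of_eventuallyEq h ?_
  rcases he.lt_or_gt with h0 | h0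
  · filter_upwards [Iio_mem_nhds h0] with x hx
    simp only [rho, if_pos (Set.mem_Iio.mp hx), if_pos h0]
  · filter_upwards [Ioi_mem_nhds h0] with x hx
    simp only [rho, if_neg (not_lt.mpr (le_of_lt (Set.mem_Ioi.mp hx))), if_neg (not_lt.mpr h0.le)]

lemma per_i (τ : ℝ) {E : Type*} [NormedAddCommGroup E] [NormedSpace ℝ E]
    (Yi : ℝ) (gi : E → ℝ) (βhat : E) (Di : E →L[ℝ] ℝ)
    (hDi : HasFDerivAt gi Di βhat) (γ : E) :
    Tendsto (fun t : ℝ => t⁻¹ * (rho τ (Yi - gi (βhat + t • γ)) - rho τ (Yi - gi βhat)))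
      (𝓝[>] 0)
      (𝓝 (-((if Yi ≠ gi βhat then psi τ (Yi - gi βhat) * Di γ else 0) +
            (if Yi = gi βhat then psi τ (-(Di γ)) * Di γ else 0)))) := by
  have hline : HasDerivAt (fun t : ℝ => βhat + t • γ) γ 0 := by
    simpa using ((hasDerivAt_id (0:ℝ)).smul_const γ).const_add βhat
  have hgd : HasFDerivAt gi Di ((fun t : ℝ => βhat + t • γ) 0) := by
    simpa using hDi
  have hcomp : HasDerivAt (fun t : ℝ => gi (βhat + t • γ)) (Di γ) 0 := by
    simpa [Function.comp_def] using hgd.comp_hasDerivAt 0 hline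
  have hφ : HasDerivAt (fun t : ℝ => Yi - gi (βhat + t • γ)) (-(Di γ)) 0 :=
    hcomp.const_sub Yi
  by_cases he : Yi = gi βhat
  · -- residual is zero
    have hφ0 : Yi - gi (βhat + (0:ℝ) • γ) = 0 := by simp [he]
    have hslope := hasDerivAt_iff_tendsto_slope.mp hφ
    have hslope' : Tendsto (slope (fun t : ℝ => Yi - gi (βhat + t • γ)) 0) (𝓝[>] 0)
        (𝓝 (-(Di γ))) :=
      hslope.mono_left (nhdsWithin_mono 0 fun x hx => ne_of_gt hx)
    have h1 : Tendsto (fun t : ℝ => rho τ (slope (fun t : ℝ => Yi - gi (βhat + t • γ)) 0 t))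
        (𝓝[>] 0) (𝓝 (rho τ (-(Di γ)))) :=
      ((rho_cont τ).continuousAt).tendsto.comp hslope'
    have heq : (fun t : ℝ => rho τ (slope (fun t : ℝ => Yi - gi (βhat + t • γ)) 0 t))
        =ᶠ[𝓝[>] (0:ℝ)]
        (fun t : ℝ => t⁻¹ * (rho τ (Yi - gi (βhat + t • γ)) - rho τ (Yi - gi βhat))) := by
      filter_upwards [self_mem_nhdsWithin] with t ht
      have ht' : (0:ℝ) < t⁻¹ := inv_pos.mpr ht
      have hr0 : rho τ (Yi - gi βhat) = 0 := by simp [rho, he]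
      rw [slope_def_field, hφ0, hr0, sub_zero, sub_zero, sub_zero, div_eq_inv_mul,
        rho_smul τ ht']
    have hval : rho τ (-(Di γ)) =
        -((if Yi ≠ gi βhat then psi τ (Yi - gi βhat) * Di γ else 0) +
          (if Yi = gi βhat then psi τ (-(Di γ)) * Di γ else 0)) := by
      simp only [he, if_pos, ne_eq, not_true_eq_false, if_false]
      show psi τ (-(Di γ)) * (-(Di γ)) = _
      ring
    rw [hval] at h1
    exact h1.congr' heq
  · have he' : Yi - gi βhat ≠ 0 := sub_ne_zero.mpr he
    have h0 : Yi - gi (βhat + (0:ℝ) • γ) = Yi - gi βhat := by simp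
    have hg : HasDerivAt (rho τ) (psi τ (Yi - gi βhat))
        ((fun t : ℝ => Yi - gi (βhat + t • γ)) 0) := by
      simpa [h0] using rho_hasDerivAt τ he'
    have hF : HasDerivAt (fun t : ℝ => rho τ (Yi - gi (βhat + t • γ)))
        (psi τ (Yi - gi βhat) * -(Di γ)) 0 := by
      simpa [Function.comp_def] using hg.comp 0 hφ
    have h1 := (hasDerivAt_iff_tendsto_slope.mp hF).mono_left
      (nhdsWithin_mono 0 fun x hx => ne_of_gt hx)
    have heq : (slope (fun t : ℝ => rho τ (Yi - gi (βhat + t • γ))) 0)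
        =ᶠ[𝓝[>] (0:ℝ)]
        (fun t : ℝ => t⁻¹ * (rho τ (Yi - gi (βhat + t • γ)) - rho τ (Yi - gi βhat))) := by
      filter_upwards [self_mem_nhdsWithin] with t ht
      rw [slope_def_field, sub_zero, div_eq_inv_mul]
      simp [h0]
    have hval : psi τ (Yi - gi βhat) * -(Di γ) =
        -((if Yi ≠ gi βhat then psi τ (Yi - gi βhat) * Di γ else 0) +
          (if Yi = gi βhat then psi τ (-(Di γ)) * Di γ else 0)) := by
      simp only [he, ne_eq, not_false_eq_true, if_true, if_false]
      ring
    rw [hval] at h1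
    exact h1.congr' heq

theorem quantile_objective_directional_derivative
    (τ : ℝ) (hτ : τ ∈ Set.Ioo (0:ℝ) 1)
    (n p : ℕ) (Y : Fin n → ℝ)
    (g : Fin n → EuclideanSpace ℝ (Fin p) → ℝ)
    (βhat : EuclideanSpace ℝ (Fin p))
    (D : Fin n → (EuclideanSpace ℝ (Fin p) →L[ℝ] ℝ))
    (hD : ∀ i, HasFDerivAt (g i) (D i) βhat)
    (Γ : EuclideanSpace ℝ (Fin p) → ℝ)
    (hΓ : Γ = fun β => ∑ i, rho τ (Y i - g i β))
    (γ : EuclideanSpace ℝ (Fin p)) (hγ : ‖γ‖ = 1) :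
    Tendsto (fun t : ℝ => t⁻¹ * (Γ (βhat + t • γ) - Γ βhat)) (𝓝[>] 0)
      (𝓝 (-(∑ i, if Y i ≠ g i βhat then psi τ (Y i - g i βhat) * D i γ else 0) -
          ∑ i, if Y i = g i βhat then psi τ (-(D i γ)) * D i γ else 0)) := by
  subst hΓ
  have hsum := tendsto_finset_sum (Finset.univ : Finset (Fin n))
    (fun i _ => per_i τ (Y i) (g i) βhat (D i) (hD i) γ)
  have hfun : (fun t : ℝ => ∑ i, t⁻¹ * (rho τ (Y i - g i (βhat + t • γ)) - rho τ (Y i - g i βhat)))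
      = fun t : ℝ => t⁻¹ * ((∑ i, rho τ (Y i - g i (βhat + t • γ))) - ∑ i, rho τ (Y i - g i βhat)) := by
    funext t
    rw [← Finset.sum_sub_distrib, Finset.mul_sum]
  have hval : (∑ i, -((if Y i ≠ g i βhat then psi τ (Y i - g i βhat) * D i γ else 0) +
        (if Y i = g i βhat then psi τ (-(D i γ)) * D i γ else 0)))
      = -(∑ i, if Y i ≠ g i βhat then psi τ (Y i - g i βhat) * D i γ else 0) -
        ∑ i, if Y i = g i βhat then psi τ (-(D i γ)) * D i γ else 0 := by
    simp only [neg_add, Finset.sum_add_distrib, Finset.sum_neg_distrib, sub_eq_add_neg]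
  rw [hfun, hval] at hsum
  exact hsum
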